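/- Let f : F_2^n → F_2^n be a Boolean network with ∂_n f_n(x) = 0 for all x, let f' : F_2^{n-1} → F_2^{n-1} be its reduction over coordinate n, and let π : F_2^n → F_2^{n-1} be the projection onto the first n-1 coordinates. If θ is an attractive cycle of f, then the image of θ under π, after removing consecutive repetitions of points, is an attractive cycle of f'. -/

import Mathlib

/-- States of a Boolean network on `n` components: `F_2^n`. -/
abbrev St (n : ℕ) := Fin n → ZMod 2

/-- The unit vector `e^i`. -/
def uv {n : ℕ} (i : Fin n) : St n := fun j => if j = i then 1 else 0

/-- There is an edge from `j` to `i` in the local interaction graph `G(f)(x)`,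
i.e. `∂_j f_i (x) = 1`. -/
def hasEdge {n : ℕ} (f : St n → St n) (x : St n) (j i : Fin n) : Prop :=
  f (x + uv j) i ≠ f x i

/-- `(j,i)` is a positive edge of `G(f)(x)`. -/
def edgePos {n : ℕ} (f : St n → St n) (x : St n) (j i : Fin n) : Prop :=
  hasEdge f x j i ∧ x j = f x i

/-- `(j,i)` is a negative edge of `G(f)(x)`. -/
def edgeNeg {n : ℕ} (f : St n → St n) (x : St n) (j i : Fin n) : Prop :=
  hasEdge f x j i ∧ x j ≠ f x i

/-- The local interaction graph `G(f)(x)` has a negative (elementary, directed) cycle: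
a cyclic sequence of pairwise distinct vertices, each consecutive pair being an edge of
`G(f)(x)`, with an odd number of negative edges. -/
def hasNegCycleAt {n : ℕ} (f : St n → St n) (x : St n) : Prop :=
  ∃ (m : ℕ) (v : Fin (m + 1) → Fin n), Function.Injective v ∧
    (∀ k, hasEdge f x (v k) (v (k + 1))) ∧
    Odd (Nat.card {k : Fin (m + 1) // edgeNeg f x (v k) (v (k + 1))})

/-- `f` is an and-net: each coordinate function is a product of literals. -/
def IsAndNet {n : ℕ} (f : St n → St n) : Prop :=
  ∀ i : Fin n, ∃ P N : Finset (Fin n), Disjoint P N ∧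
    ∀ x : St n, f x i = (∏ j ∈ P, x j) * ∏ j ∈ N, (x j + 1)

/-- The nonempty list `L` enumerates an attractive cycle of `f`: pairwise distinct
points, each point has Hamming distance `1` to its image, and `f` maps each point to the
(cyclically) next one. -/
def IsAttrCycleList {n : ℕ} (f : St n → St n) (L : List (St n)) : Prop :=
  L ≠ [] ∧ L.Nodup ∧
  ∀ (k : ℕ) (hk : k < L.length),
    hammingDist (L.get ⟨k, hk⟩) (f (L.get ⟨k, hk⟩)) = 1 ∧
    f (L.get ⟨k, hk⟩) =
      L.get ⟨(k + 1) % L.length, Nat.mod_lt _ (Nat.lt_of_le_of_lt (Nat.zero_le k) hk)⟩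

/-- Remove consecutive repetitions from a list, viewed cyclically: first remove
consecutive duplicates, then remove the last element if it equals the first. -/
def cycDedup {α : Type*} [DecidableEq α] (L : List α) : List α :=
  let M := L.destutter (· ≠ ·)
  if M.getLast? = M.head? ∧ 1 < M.length then M.dropLast else M

/-- For `x ∈ F_2^n`, the point `x' = (x, f_n(x,0)) ∈ F_2^{n+1}`. -/
def extn {n : ℕ} (f : St (n + 1) → St (n + 1)) (x : St n) : St (n + 1) :=
  Fin.snoc x (f (Fin.snoc x 0) (Fin.last n))

theorem List.chain'_iff_get {α : Type*} {R : α → α → Prop} {l : List α} :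
    List.Chain' R l ↔ ∀ (i : ℕ) (h : i < l.length - 1),
      R (l.get ⟨i, by omega⟩) (l.get ⟨i + 1, by omega⟩) := by
  show List.IsChain R l ↔ _
  rw [List.isChain_iff_getElem]
  constructor <;> intro h i hi <;> exact h i (by omega)

theorem List.chain'_cons {α : Type*} {R : α → α → Prop} {x y : α} {l : List α} :
    List.Chain' R (x :: y :: l) ↔ R x y ∧ List.Chain' R (y :: l) :=
  List.isChain_cons_cons

theorem List.chain'_cons' {α : Type*} {R : α → α → Prop} {x : α} {l : List α} :
    List.Chain' R (x :: l) ↔ (∀ y ∈ l.head?, R x y) ∧ List.Chain' R l :=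
  List.isChain_cons

@[simp] theorem List.chain'_nil {α : Type*} {R : α → α → Prop} : List.Chain' R [] :=
  List.isChain_nil

@[simp] theorem List.chain'_singleton {α : Type*} {R : α → α → Prop} (a : α) :
    List.Chain' R [a] :=
  List.isChain_singleton a

theorem List.destutter_is_chain' {α : Type*} (R : α → α → Prop) [DecidableRel R]
    (l : List α) : (l.destutter R).Chain' R :=
  List.isChain_destutter R l

namespace Stmt6

open List

variable {n : ℕ}

lemma z2 (a : ZMod 2) : a = 0 ∨ a = 1 := by revert a; decide

lemma zne {a b : ZMod 2} (h : a ≠ b) : b = a + 1 := by revert h; revert a b; decide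

lemma zne' (a : ZMod 2) : a + 1 ≠ a := by revert a; decide

lemma uv_self (j : Fin n) : uv j j = 1 := by simp [uv]

lemma uv_ne {j k : Fin n} (h : k ≠ j) : uv j k = 0 := by simp [uv, h]

lemma add_uv_self (x : St n) (j : Fin n) : (x + uv j) j = x j + 1 := by
  simp [uv]

lemma add_uv_ne (x : St n) {j k : Fin n} (h : k ≠ j) : (x + uv j) k = x k := by
  simp [uv, h]

lemma ne_add_uv (x : St n) (j : Fin n) : x + uv j ≠ x := by
  intro h
  have := congrFun h j
  rw [add_uv_self] at this
  exact zne' _ this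

lemma ham_add_uv (x : St n) (j : Fin n) : hammingDist x (x + uv j) = 1 := by
  have : ({i | x i ≠ (x + uv j) i} : Finset (Fin n)) = {j} := by
    ext k
    simp only [Finset.mem_filter, Finset.mem_univ, true_and, Finset.mem_singleton,
      Finset.mem_insert] at *
    constructor
    · intro hk
      by_contra hkj
      exact hk (add_uv_ne x hkj).symm
    · intro hk
      subst hk
      rw [add_uv_self]
      intro h; exact zne' _ h.symm
  rw [hammingDist, this, Finset.card_singleton]

lemma ham_one {x y : St n} (h : hammingDist x y = 1) : ∃ j, y = x + uv j := by
  rw [hammingDist, Finset.card_eq_one] at h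
  obtain ⟨j, hj⟩ := h
  refine ⟨j, funext fun k => ?_⟩
  have hmem : ∀ k : Fin n, x k ≠ y k ↔ k = j := by
    intro k
    rw [← Finset.mem_singleton, ← hj]
    simp
  by_cases hkj : k = j
  · subst hkj
    have := (hmem k).2 rfl
    rw [add_uv_self]
    exact zne this
  · rw [add_uv_ne x hkj]
    by_contra hne
    exact hkj ((hmem k).1 (Ne.symm hne))


lemma init_add_uv_castSucc (x : St (n + 1)) (i : Fin n) :
    Fin.init (x + uv i.castSucc) = Fin.init x + uv i := by
  funext k
  show (x + uv i.castSucc) k.castSucc = x k.castSucc + uv i k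
  by_cases hk : k = i
  · subst hk
    rw [add_uv_self, uv_self]
  · rw [add_uv_ne x (by simpa [Fin.castSucc_inj] using hk), uv_ne hk, add_zero]

lemma init_add_uv_last (x : St (n + 1)) :
    Fin.init (x + uv (Fin.last n)) = Fin.init x := by
  funext k
  show (x + uv (Fin.last n)) k.castSucc = x k.castSucc
  exact add_uv_ne x (Fin.castSucc_lt_last k).ne

lemma eq_add_uv_last {x y : St (n + 1)} (hinit : Fin.init y = Fin.init x) (hne : y ≠ x) :
    y = x + uv (Fin.last n) := by
  have hlast : y (Fin.last n) ≠ x (Fin.last n) := by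
    intro h
    apply hne
    funext j
    refine Fin.lastCases h (fun i => ?_) j
    exact congrFun hinit i
  funext j
  refine Fin.lastCases ?_ (fun i => ?_) j
  · rw [add_uv_self]
    exact zne (Ne.symm hlast)
  · rw [add_uv_ne x (Fin.castSucc_lt_last i).ne]
    exact congrFun hinit i

section Dyn

variable (f : St (n + 1) → St (n + 1)) (f' : St n → St n)

/-- core: a non-flip step moves the projection. -/
lemma nonflip_core {x : St (n + 1)} (h1 : hammingDist x (f x) = 1)
    (h2 : f x (Fin.last n) = x (Fin.last n)) :
    ∃ i : Fin n, f x = x + uv i.castSucc := by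
  obtain ⟨j, hj⟩ := ham_one h1
  have hjlast : j ≠ Fin.last n := by
    intro h
    subst h
    rw [hj, add_uv_self] at h2
    exact zne' _ h2
  obtain ⟨i, rfl⟩ := Fin.exists_castSucc_eq.mpr hjlast
  exact ⟨i, hj⟩

lemma nonflip_ne {x : St (n + 1)} (h1 : hammingDist x (f x) = 1)
    (h2 : f x (Fin.last n) = x (Fin.last n)) :
    Fin.init (f x) ≠ Fin.init x := by
  obtain ⟨i, hi⟩ := nonflip_core f h1 h2
  rw [hi, init_add_uv_castSucc]
  exact ne_add_uv _ _

lemma flip_eq {x : St (n + 1)} (h1 : hammingDist x (f x) = 1)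
    (h2 : f x (Fin.last n) ≠ x (Fin.last n)) :
    f x = x + uv (Fin.last n) ∧ Fin.init (f x) = Fin.init x := by
  obtain ⟨j, hj⟩ := ham_one h1
  have : j = Fin.last n := by
    by_contra h
    obtain ⟨i, rfl⟩ := Fin.exists_castSucc_eq.mpr h
    apply h2
    rw [hj]
    exact add_uv_ne x (Fin.castSucc_lt_last i).ne'
  subst this
  exact ⟨hj, by rw [hj, init_add_uv_last]⟩

variable (hloop : ∀ x : St (n + 1), f (x + uv (Fin.last n)) (Fin.last n) = f x (Fin.last n))

include hloop

lemma f_snoc_zero_last (x : St (n + 1)) :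
    f (Fin.snoc (Fin.init x) (0 : ZMod 2)) (Fin.last n) = f x (Fin.last n) := by
  rcases z2 (x (Fin.last n)) with h | h
  · rw [show (0 : ZMod 2) = x (Fin.last n) from h.symm, Fin.snoc_init_self]
  · have hs : Fin.snoc (Fin.init x) (0 : ZMod 2) = x + uv (Fin.last n) := by
      funext j
      refine Fin.lastCases ?_ (fun i => ?_) j
      · rw [Fin.snoc_last, add_uv_self, h]
        decide
      · rw [Fin.snoc_castSucc, add_uv_ne x (Fin.castSucc_lt_last i).ne]
        rfl
    rw [hs, hloop]

lemma extn_init_eq_self {x : St (n + 1)} (h2 : f x (Fin.last n) = x (Fin.last n)) :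
    extn f (Fin.init x) = x := by
  unfold extn
  rw [f_snoc_zero_last f hloop x, h2, Fin.snoc_init_self]

/-- GF: a flip step is never followed by a flip step. -/
lemma flip_then_nonflip {x y : St (n + 1)} (hxy : f x = y) (hinit : Fin.init y = Fin.init x)
    (hham : hammingDist y (f y) = 1) :
    f y (Fin.last n) = y (Fin.last n) ∧ Fin.init (f y) ≠ Fin.init y := by
  have hne : y ≠ x := by
    intro h
    subst h
    rw [hxy] at hham
    rw [hammingDist_self] at hham
    exact one_ne_zero hham.symm
  have hy : y = x + uv (Fin.last n) := eq_add_uv_last hinit hne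
  have hfy : f y (Fin.last n) = y (Fin.last n) := by
    conv_lhs => rw [hy]
    rw [hloop]
    exact congrFun hxy (Fin.last n)
  exact ⟨hfy, nonflip_ne f hham hfy⟩

variable (hf' : ∀ (x : St n) (i : Fin n), f' x i = f (extn f x) i.castSucc)

include hf'

lemma nonflip_f' {x : St (n + 1)} (h1 : hammingDist x (f x) = 1)
    (h2 : f x (Fin.last n) = x (Fin.last n)) :
    f' (Fin.init x) = Fin.init (f x) ∧ hammingDist (Fin.init x) (f' (Fin.init x)) = 1 := by
  have hfeq : f' (Fin.init x) = Fin.init (f x) := by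
    funext i'
    rw [hf', extn_init_eq_self f hloop h2]
    rfl
  obtain ⟨i, hi⟩ := nonflip_core f h1 h2
  refine ⟨hfeq, ?_⟩
  rw [hfeq, hi, init_add_uv_castSucc]
  exact ham_add_uv _ _

end Dyn



section ListExtra
variable {α : Type*} [DecidableEq α]

lemma head?_eq_get {l : List α} (h0 : 0 < l.length) : l.head? = some (l.get ⟨0, h0⟩) := by
  cases l with
  | nil => simp at h0
  | cons a t => rfl

lemma getLast?_eq_get {l : List α} (h0 : 0 < l.length) :
    l.getLast? = some (l.get ⟨l.length - 1, by omega⟩) := by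
  have hne : l ≠ [] := List.ne_nil_of_length_pos h0
  rw [List.getLast?_eq_getLast hne, List.getLast_eq_getElem]
  rfl

lemma cycDedup_eq (L : List α) :
    cycDedup L = if (L.destutter (· ≠ ·)).getLast? = (L.destutter (· ≠ ·)).head? ∧
        1 < (L.destutter (· ≠ ·)).length then
      (L.destutter (· ≠ ·)).dropLast else L.destutter (· ≠ ·) := rfl

lemma head?_destutter' : ∀ (l : List α) (a : α),
    (l.destutter' (· ≠ ·) a).head? = some a
  | [], a => rfl
  | b :: t, a => by
    rw [List.destutter'_cons]
    by_cases h : a ≠ b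
    · rw [if_pos h]; rfl
    · rw [if_neg h]; exact head?_destutter' t a

lemma head?_destutter : ∀ (l : List α), (l.destutter (· ≠ ·)).head? = l.head?
  | [] => rfl
  | a :: l => by rw [List.destutter_cons', head?_destutter' l a]; rfl

lemma getLast?_destutter' : ∀ (l : List α) (a : α),
    (l.destutter' (· ≠ ·) a).getLast? = (a :: l).getLast?
  | [], a => rfl
  | b :: t, a => by
    rw [List.destutter'_cons]
    by_cases h : a ≠ b
    · rw [if_pos h]
      cases hD : t.destutter' (· ≠ ·) b with
      | nil => exact absurd hD (List.destutter'_ne_nil t (· ≠ ·))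
      | cons d D =>
        have hIH := getLast?_destutter' t b
        rw [hD] at hIH
        rw [List.getLast?_cons_cons, hIH]
        exact (List.getLast?_cons_cons).symm
    · rw [if_neg h]
      rw [getLast?_destutter' t a]
      push_neg at h
      subst h
      cases t with
      | nil => rfl
      | cons c t' => exact (List.getLast?_cons_cons).symm

lemma getLast?_destutter (l : List α) : (l.destutter (· ≠ ·)).getLast? = l.getLast? := by
  cases l with
  | nil => rfl
  | cons a l => rw [List.destutter_cons', getLast?_destutter' l a]

lemma destutter'_append_singleton : ∀ (l : List α) (a c : α),
    (∀ d ∈ (a :: l).getLast?, c ≠ d) →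
    ((l ++ [c]).destutter' (· ≠ ·) a) = l.destutter' (· ≠ ·) a ++ [c]
  | [], a, c, h => by
    have hca : c ≠ a := h a rfl
    simp [List.destutter'_singleton, Ne.symm hca]
  | b :: t, a, c, h => by
    have h' : ∀ d ∈ (b :: t).getLast?, c ≠ d := by
      intro d hd
      apply h
      rw [List.getLast?_cons_cons]
      exact hd
    rw [List.cons_append, List.destutter'_cons, List.destutter'_cons]
    by_cases hab : a ≠ b
    · rw [if_pos hab, if_pos hab, destutter'_append_singleton t b c h', List.cons_append]
    · rw [if_neg hab, if_neg hab]
      push_neg at hab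
      subst hab
      apply destutter'_append_singleton t a c
      intro d hd
      apply h'
      cases t with
      | nil => exact hd
      | cons e t' => rw [List.getLast?_cons_cons] at hd ⊢; exact hd

lemma destutter_append_singleton (l : List α) (c : α) (hl : l ≠ [])
    (h : ∀ d ∈ l.getLast?, c ≠ d) :
    (l ++ [c]).destutter (· ≠ ·) = l.destutter (· ≠ ·) ++ [c] := by
  cases l with
  | nil => exact absurd rfl hl
  | cons a t =>
    rw [List.cons_append, List.destutter_cons', List.destutter_cons',
      destutter'_append_singleton t a c h]

lemma get_of_head? {l : List α} {u : α} (h : l.head? = some u) (h0 : 0 < l.length) :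
    l.get ⟨0, h0⟩ = u := by
  cases l with
  | nil => simp at h0
  | cons a t => simpa using h

lemma get_of_getLast? {l : List α} {u : α} (h : l.getLast? = some u)
    (h1 : l.length - 1 < l.length) : l.get ⟨l.length - 1, h1⟩ = u := by
  have hne : l ≠ [] := by rintro rfl; simp at h1
  rw [List.getLast?_eq_getLast hne] at h
  rw [List.get_eq_getElem, ← List.getLast_eq_getElem hne]
  exact Option.some_injective _ h

/-- Nodup criterion for sublists of lists whose duplicates occur only at
adjacent (cyclically) positions. -/
lemma nodup_of_sublist {A M : List α} (hsub : M <+ A) (hch : M.Chain' (· ≠ ·))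
    (hdup : ∀ (p q : ℕ) (hp : p < A.length) (hq : q < A.length), p < q →
      A.get ⟨p, hp⟩ = A.get ⟨q, hq⟩ → q = p + 1 ∨ (p = 0 ∧ q = A.length - 1))
    (hhl : ∀ (h0 : 0 < M.length) (h1 : M.length - 1 < M.length), 1 < M.length →
      M.get ⟨0, h0⟩ ≠ M.get ⟨M.length - 1, h1⟩) :
    M.Nodup := by
  rw [List.nodup_iff_injective_get]
  have key : ∀ (i j : Fin M.length), i < j → M.get i ≠ M.get j := by
    intro i j hij heq
    obtain ⟨e, he⟩ := List.sublist_iff_exists_fin_orderEmbedding_get_eq.mp hsub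
    have hpq : e i < e j := e.strictMono hij
    have hA : A.get (e i) = A.get (e j) := by rw [← he i, ← he j, heq]
    have hd := hdup (e i).1 (e j).1 (e i).2 (e j).2 hpq (by
      convert hA <;> simp)
    rcases hd with hd | ⟨hd0, hd1⟩
    · -- q = p + 1 forces j = i + 1, contradicting the chain
      have hjlt : (i : ℕ) + 1 < M.length := by
        have := hij
        omega
      set k : Fin M.length := ⟨(i : ℕ) + 1, hjlt⟩ with hk
      have hik : i < k := by simp [hk, Fin.lt_def]
      have hkj : k ≤ j := by simp [hk, Fin.le_def]; omega
      have h1 : e i < e k := e.strictMono hik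
      have h2 : e k ≤ e j := e.monotone hkj
      have hek : e k = e j := by
        apply Fin.ext
        have := h1
        have := h2
        rw [Fin.lt_def] at h1
        rw [Fin.le_def] at h2
        omega
      have hkj' : k = j := e.injective hek
      have hchain := List.chain'_iff_get.mp hch (i : ℕ) (by omega)
      apply hchain
      have : M.get i = M.get k := by rw [hkj']; exact heq
      convert this <;> simp [hk]
    · -- wrap-around duplicate
      have hi0 : (i : ℕ) = 0 := by
        by_contra h0
        have : (0 : ℕ) < (i : ℕ) := by omega
        have hlt : (⟨0, by omega⟩ : Fin M.length) < i := this
        have := e.strictMono hlt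
        rw [Fin.lt_def, hd0] at this
        omega
      have hj1 : (j : ℕ) = M.length - 1 := by
        by_contra h1
        have hjlt : (j : ℕ) + 1 < M.length := by
          have := j.2
          omega
        have hlt : j < (⟨(j : ℕ) + 1, hjlt⟩ : Fin M.length) := by simp [Fin.lt_def]
        have h2 := e.strictMono hlt
        rw [Fin.lt_def, hd1] at h2
        have := (e ⟨(j : ℕ) + 1, hjlt⟩).2
        omega
      have hlen : 1 < M.length := by
        have := hij
        rw [Fin.lt_def, hi0] at this
        have := j.2
        omega
      apply hhl (by omega) (by omega) hlen
      have e1 : M.get ⟨0, by omega⟩ = M.get i := by congr 1; exact (Fin.ext hi0.symm)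
      have e2 : M.get ⟨M.length - 1, by omega⟩ = M.get j := by congr 1; exact (Fin.ext hj1.symm)
      rw [e1, e2, heq]
  intro i j hij
  by_contra hne
  rcases lt_or_gt_of_ne hne with h | h
  · exact key i j h hij
  · exact key j i h hij.symm


end ListExtra

def Rrel (f' : St n → St n) (u v : St n) : Prop :=
  hammingDist u (f' u) = 1 ∧ f' u = v

def Prel (f' : St n → St n) (x y : St (n + 1)) : Prop :=
  Fin.init x = Fin.init y ∨ Rrel f' (Fin.init x) (Fin.init y)

def DDrel (f : St (n + 1) → St (n + 1)) (x y : St (n + 1)) : Prop :=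
  Fin.init x = Fin.init y → f x = y

lemma main_chain (f : St (n + 1) → St (n + 1)) (f' : St n → St n)
    (GF : ∀ x y : St (n + 1), f x = y → Fin.init y = Fin.init x →
      hammingDist y (f y) = 1 → Fin.init (f y) ≠ Fin.init y) :
    ∀ (N : ℕ) (K : List (St (n + 1))), K.length ≤ N →
      (∀ x ∈ K, hammingDist x (f x) = 1) → K.Pairwise (DDrel f) → K.Chain' (Prel f') →
      ((K.map Fin.init).destutter (· ≠ ·)).Chain' (Rrel f') := by
  intro N
  induction N with
  | zero =>
    intro K hK _ _ _
    rw [List.length_eq_zero_iff.mp (Nat.le_zero.mp hK)]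
    simp
  | succ N ih =>
    intro K hK hham hdd hch
    match K with
    | [] => simp
    | [x] => simp
    | x :: y :: l =>
      have hlen : (x :: y :: l).length = l.length + 2 := by simp
      have hxy : Prel f' x y := (List.chain'_cons.mp hch).1
      have hchyl : (y :: l).Chain' (Prel f') := (List.chain'_cons.mp hch).2
      have hddx := List.pairwise_cons.mp hdd
      have hddyl : (y :: l).Pairwise (DDrel f) := hddx.2
      by_cases hinit : Fin.init x = Fin.init y
      · -- flip step: collapse y
        have hfxy : f x = y := hddx.1 y (by simp) hinit
        have hmap : (((x :: y :: l).map Fin.init).destutter (· ≠ ·))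
            = (((x :: l).map Fin.init).destutter (· ≠ ·)) := by
          simp only [List.map_cons]
          rw [List.destutter_cons_cons, if_neg (not_not_intro hinit)]
          rfl
        rw [hmap]
        apply ih (x :: l)
        · simp only [List.length_cons] at hK ⊢
          omega
        · intro z hz
          apply hham
          rcases List.mem_cons.mp hz with rfl | hz
          · exact List.mem_cons_self
          · exact List.mem_cons_of_mem _ (List.mem_cons_of_mem _ hz)
        · -- Pairwise
          rw [List.pairwise_cons]
          refine ⟨?_, (List.pairwise_cons.mp hddyl).2⟩
          intro w hw hinw
          exfalso
          have hyw : f y = w :=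
            (List.pairwise_cons.mp hddyl).1 w hw (hinit ▸ hinw)
          have := GF x y hfxy hinit.symm (hham y (by simp))
          rw [hyw] at this
          exact this (hinw ▸ hinit)
        · -- Chain'
          cases l with
          | nil => simp
          | cons z l' =>
            have hyz : Prel f' y z := (List.chain'_cons.mp hchyl).1
            have htl : (z :: l').Chain' (Prel f') := (List.chain'_cons.mp hchyl).2
            rw [List.chain'_cons]
            refine ⟨?_, htl⟩
            rcases hyz with hyz | hyz
            · exfalso
              have hfyz : f y = z :=
                (List.pairwise_cons.mp hddyl).1 z (by simp) hyz
              have := GF x y hfxy hinit.symm (hham y (by simp))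
              rw [hfyz] at this
              exact this hyz.symm
            · exact Or.inr (by rw [hinit]; exact hyz)
      · -- non-flip step
        have hR : Rrel f' (Fin.init x) (Fin.init y) := hxy.resolve_left hinit
        simp only [List.map_cons]
        rw [List.destutter_cons_cons, if_pos hinit]
        have htail := ih (y :: l)
          (by simp only [List.length_cons] at hK ⊢; omega)
          (fun z hz => hham z (List.mem_cons_of_mem _ hz))
          hddyl hchyl
        simp only [List.map_cons] at htail
        rw [List.chain'_cons']
        refine ⟨?_, htail⟩
        intro b hb
        have hh : ∀ (t : List (St n)) (u : St n),
            (List.destutter' (· ≠ ·) u t).head? = some u := by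
          intro t
          induction t with
          | nil => intro u; rfl
          | cons c t' ihh =>
            intro u
            rw [List.destutter'_cons]
            by_cases hc : u ≠ c
            · rw [if_pos hc]; rfl
            · rw [if_neg hc]; exact ihh u
        rw [hh, Option.mem_def, Option.some.injEq] at hb
        exact hb ▸ hR

lemma toIs (f' : St n → St n) (M : List (St n)) (hne : M ≠ []) (hnd : M.Nodup)
    (hch : M.Chain' (Rrel f'))
    (hwrap : ∀ (h0 : 0 < M.length) (h1 : M.length - 1 < M.length),
        Rrel f' (M.get ⟨M.length - 1, h1⟩) (M.get ⟨0, h0⟩)) :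
    M ≠ [] ∧ M.Nodup ∧
      ∀ (k : ℕ) (hk : k < M.length),
        hammingDist (M.get ⟨k, hk⟩) (f' (M.get ⟨k, hk⟩)) = 1 ∧
          f' (M.get ⟨k, hk⟩) =
            M.get ⟨(k + 1) % M.length,
              Nat.mod_lt _ (Nat.lt_of_le_of_lt (Nat.zero_le k) hk)⟩ := by
  refine ⟨hne, hnd, ?_⟩
  intro k hk
  by_cases h : k + 1 < M.length
  · have hc := List.chain'_iff_get.mp hch k (by omega)
    have hmod : (k + 1) % M.length = k + 1 := Nat.mod_eq_of_lt h
    refine ⟨hc.1, ?_⟩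
    rw [hc.2]
    congr 1
    exact Fin.ext hmod.symm
  · have hk1 : k = M.length - 1 := by omega
    have hmod : (k + 1) % M.length = 0 := by
      have : k + 1 = M.length := by omega
      rw [this, Nat.mod_self]
    have hw := hwrap (by omega) (by omega)
    have e1 : M.get ⟨k, hk⟩ = M.get ⟨M.length - 1, by omega⟩ := by
      congr 1
      exact Fin.ext hk1
    have e2 : M.get ⟨(k + 1) % M.length,
        Nat.mod_lt _ (Nat.lt_of_le_of_lt (Nat.zero_le k) hk)⟩ = M.get ⟨0, by omega⟩ := by
      congr 1
      exact Fin.ext hmod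
    rw [e1, e2]
    exact ⟨hw.1, hw.2⟩


end Stmt6

/-- Attractive cycles are preserved by reduction: if `G(f)` has no loop on the last
coordinate, `f'` is the reduction of `f` over that coordinate, and `θ` is an attractive
cycle of `f`, then the image of `θ` under the projection `π` on the first `n`
coordinates, after removing consecutive repetitions, is an attractive cycle of `f'`. -/
theorem stmt_6 (n : ℕ) (f : St (n + 1) → St (n + 1)) (f' : St n → St n)
    (hloop : ∀ x : St (n + 1), f (x + uv (Fin.last n)) (Fin.last n) = f x (Fin.last n))
    (hf' : ∀ (x : St n) (i : Fin n), f' x i = f (extn f x) i.castSucc)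
    (L : List (St (n + 1))) (hL : IsAttrCycleList f L) :
    IsAttrCycleList f' (cycDedup (L.map Fin.init)) := by
  classical
  obtain ⟨hne, hnd, hstep⟩ := hL
  have GF : ∀ x y : St (n + 1), f x = y → Fin.init y = Fin.init x →
      hammingDist y (f y) = 1 → Fin.init (f y) ≠ Fin.init y :=
    fun x y hxy hi hh => (Stmt6.flip_then_nonflip f hloop hxy hi hh).2
  set N := L.length with hNdef
  have hN0 : 0 < N := List.length_pos_iff.mpr hne
  have hham : ∀ (k : ℕ) (hk : k < N),
      hammingDist (L.get ⟨k, hk⟩) (f (L.get ⟨k, hk⟩)) = 1 := fun k hk => (hstep k hk).1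
  have hhamL : ∀ x ∈ L, hammingDist x (f x) = 1 := by
    intro x hx
    obtain ⟨k, hk⟩ := List.mem_iff_get.mp hx
    rw [← hk]
    exact hham k.1 k.2
  have hsucc : ∀ (k : ℕ) (hk : k + 1 < N),
      f (L.get ⟨k, by omega⟩) = L.get ⟨k + 1, hk⟩ := by
    intro k hk
    rw [(hstep k (by omega)).2]
    congr 1
    exact Fin.ext (Nat.mod_eq_of_lt hk)
  have hwrapstep : f (L.get ⟨N - 1, by omega⟩) = L.get ⟨0, hN0⟩ := by
    rw [(hstep (N - 1) (by omega)).2]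
    congr 1
    apply Fin.ext
    show (N - 1 + 1) % N = 0
    have h1 : N - 1 + 1 = N := by omega
    rw [h1, Nat.mod_self]
  have hN2 : 2 ≤ N := by
    by_contra h
    have hN1 : N = 1 := by omega
    have h0 := hham 0 (by omega)
    have heq : f (L.get ⟨0, by omega⟩) = L.get ⟨0, by omega⟩ := by
      have := hwrapstep
      simp only [hN1] at this ⊢
      exact this
    rw [heq, hammingDist_self] at h0
    omega
  -- duplicate projections occur only at cyclically adjacent positions
  have hdupL : ∀ (p q : ℕ) (hp : p < N) (hq : q < N), p < q →
      Fin.init (L.get ⟨p, hp⟩) = Fin.init (L.get ⟨q, hq⟩) →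
      (q = p + 1 ∧ f (L.get ⟨p, hp⟩) = L.get ⟨q, hq⟩) ∨
      (p = 0 ∧ q = N - 1 ∧ f (L.get ⟨q, hq⟩) = L.get ⟨p, hp⟩) := by
    intro p q hp hq hpq hinit
    have hxyne : L.get ⟨q, hq⟩ ≠ L.get ⟨p, hp⟩ := by
      intro h
      have := hnd.get_inj_iff.mp h
      rw [Fin.mk.injEq] at this
      omega
    have hy : L.get ⟨q, hq⟩ = L.get ⟨p, hp⟩ + uv (Fin.last n) :=
      Stmt6.eq_add_uv_last hinit.symm hxyne
    by_cases hflip : f (L.get ⟨p, hp⟩) (Fin.last n) = (L.get ⟨p, hp⟩) (Fin.last n)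
    · right
      have hfyl : f (L.get ⟨q, hq⟩) (Fin.last n) ≠ (L.get ⟨q, hq⟩) (Fin.last n) := by
        have h1 : f (L.get ⟨q, hq⟩) (Fin.last n) = f (L.get ⟨p, hp⟩) (Fin.last n) := by
          conv_lhs => rw [hy]
          rw [hloop]
        have h2 : (L.get ⟨q, hq⟩) (Fin.last n) = (L.get ⟨p, hp⟩) (Fin.last n) + 1 := by
          rw [hy]
          exact Stmt6.add_uv_self _ _
        rw [h1, hflip, h2]
        exact fun hc => Stmt6.zne' _ hc.symm
      have hfy := (Stmt6.flip_eq f (hham q hq) hfyl).1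
      have hfyx : f (L.get ⟨q, hq⟩) = L.get ⟨p, hp⟩ := by
        rw [hfy, hy]
        funext j
        by_cases hj : j = Fin.last n
        · subst hj
          rw [Stmt6.add_uv_self, Stmt6.add_uv_self]
          generalize (L.get ⟨p, hp⟩) (Fin.last n) = z
          revert z
          decide
        · rw [Stmt6.add_uv_ne _ hj, Stmt6.add_uv_ne _ hj]
      have hget : L.get ⟨(q + 1) % N, Nat.mod_lt _ hN0⟩ = L.get ⟨p, hp⟩ := by
        rw [← (hstep q hq).2]
        exact hfyx
      have hidx : (q + 1) % N = p := by
        have h3 := hnd.get_inj_iff.mp hget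
        rw [Fin.mk.injEq] at h3
        exact h3
      have hq1 : q + 1 = N := by
        rcases Nat.lt_or_ge (q + 1) N with h | h
        · rw [Nat.mod_eq_of_lt h] at hidx; omega
        · omega
      have hp0 : p = 0 := by
        rw [hq1, Nat.mod_self] at hidx
        omega
      exact ⟨hp0, by omega, hfyx⟩
    · left
      have hfx := (Stmt6.flip_eq f (hham p hp) hflip).1
      have hfxy : f (L.get ⟨p, hp⟩) = L.get ⟨q, hq⟩ := by rw [hfx, ← hy]
      have hget : L.get ⟨(p + 1) % N, Nat.mod_lt _ hN0⟩ = L.get ⟨q, hq⟩ := by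
        rw [← (hstep p hp).2]
        exact hfxy
      have hidx : (p + 1) % N = q := by
        have h3 := hnd.get_inj_iff.mp hget
        rw [Fin.mk.injEq] at h3
        exact h3
      have hq1 : q = p + 1 := by
        rcases Nat.lt_or_ge (p + 1) N with h | h
        · rw [Nat.mod_eq_of_lt h] at hidx; omega
        · have : p + 1 = N := by omega
          rw [this, Nat.mod_self] at hidx
          omega
      exact ⟨hq1, hfxy⟩
  -- a single non-flip step yields an `Rrel` edge on projections
  have hRrel_of : ∀ (x w : St (n + 1)), f x = w → hammingDist x (f x) = 1 →
      Fin.init x ≠ Fin.init w → Stmt6.Rrel f' (Fin.init x) (Fin.init w) := by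
    intro x w hfw hhm hne'
    have hfl : f x (Fin.last n) = x (Fin.last n) := by
      by_contra hc
      have := (Stmt6.flip_eq f hhm hc).2
      rw [hfw] at this
      exact hne' this.symm
    obtain ⟨hfeq, hh⟩ := Stmt6.nonflip_f' f f' hloop hf' hhm hfl
    exact ⟨hh, by rw [hfeq, hfw]⟩
  have hPrel : ∀ (k : ℕ) (hk : k + 1 < N),
      Stmt6.Prel f' (L.get ⟨k, by omega⟩) (L.get ⟨k + 1, hk⟩) := by
    intro k hk
    by_cases hinit : Fin.init (L.get ⟨k, by omega⟩) = Fin.init (L.get ⟨k + 1, hk⟩)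
    · exact Or.inl hinit
    · exact Or.inr (hRrel_of _ _ (hsucc k hk) (hham k (by omega)) hinit)
  have hAget : ∀ (k : ℕ) (hk : k < (L.map Fin.init).length),
      (L.map Fin.init).get ⟨k, hk⟩ = Fin.init (L.get ⟨k, by simpa using hk⟩) := by
    intro k hk
    simp
  have hAlen : (L.map Fin.init).length = N := by simp [hNdef]
  have hAhead : (L.map Fin.init).head? = some (Fin.init (L.get ⟨0, hN0⟩)) := by
    rw [Stmt6.head?_eq_get (l := L.map Fin.init) (by simpa using hN0)]
    rw [hAget]
  have hAlast : (L.map Fin.init).getLast? = some (Fin.init (L.get ⟨N - 1, by omega⟩)) := by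
    have h0 : 0 < (L.map Fin.init).length := by simpa using hN0
    rw [Stmt6.getLast?_eq_get h0, hAget ((L.map Fin.init).length - 1) (by omega)]
    simp only [hAlen]
  by_cases hcase : Fin.init (L.get ⟨N - 1, by omega⟩) = Fin.init (L.get ⟨0, hN0⟩)
  · -- flip across the wrap: drop the last element
    have hN3 : 3 ≤ N := by
      by_contra h
      have hN2' : N = 2 := by omega
      have hfab : f (L.get ⟨0, hN0⟩) = L.get ⟨N - 1, by omega⟩ := by
        have := hsucc 0 (by omega)
        rw [this]
        congr 1
        simp only [Fin.mk.injEq]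
        omega
      have h2 := GF _ _ hfab hcase (hham (N - 1) (by omega))
      rw [hwrapstep] at h2
      exact h2 hcase.symm
    have hfc : f (L.get ⟨N - 2, by omega⟩) = L.get ⟨N - 1, by omega⟩ := by
      have := hsucc (N - 2) (by omega)
      rw [this]
      congr 1
      simp only [Fin.mk.injEq]
      omega
    have hcb : Fin.init (L.get ⟨N - 2, by omega⟩) ≠ Fin.init (L.get ⟨N - 1, by omega⟩) := by
      intro h
      have h2 := GF _ _ hfc h.symm (hham (N - 1) (by omega))
      rw [hwrapstep] at h2
      exact h2 hcase.symm
    have hL'len : L.dropLast.length = N - 1 := by simp [hNdef]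
    have hL'get : ∀ (k : ℕ) (hk : k < L.dropLast.length),
        L.dropLast.get ⟨k, hk⟩ = L.get ⟨k, by rw [hL'len] at hk; omega⟩ := by
      intro k hk
      rw [List.get_eq_getElem, List.getElem_dropLast]
      rfl
    have hA'len : (L.dropLast.map Fin.init).length = N - 1 := by simp [hNdef]
    have hA'get : ∀ (k : ℕ) (hk : k < N - 1),
        (L.dropLast.map Fin.init).get ⟨k, by rw [hA'len]; omega⟩ =
          Fin.init (L.get ⟨k, by omega⟩) := by
      intro k hk
      rw [List.get_eq_getElem, List.getElem_map, List.getElem_dropLast]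
      rfl
    have hA'ne : L.dropLast.map Fin.init ≠ [] := by
      intro h
      have h2 : (L.dropLast.map Fin.init).length = 0 := by rw [h]; rfl
      rw [hA'len] at h2
      omega
    have hA'head : (L.dropLast.map Fin.init).head? = some (Fin.init (L.get ⟨0, hN0⟩)) := by
      rw [Stmt6.head?_eq_get (l := L.dropLast.map Fin.init) (by rw [hA'len]; omega)]
      rw [hA'get 0 (by omega)]
    have hA'last : (L.dropLast.map Fin.init).getLast? =
        some (Fin.init (L.get ⟨N - 2, by omega⟩)) := by
      rw [Stmt6.getLast?_eq_get (l := L.dropLast.map Fin.init) (by rw [hA'len]; omega)]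
      have : (L.dropLast.map Fin.init).length - 1 = N - 2 := by rw [hA'len]; omega
      rw [show ((L.dropLast.map Fin.init).get ⟨(L.dropLast.map Fin.init).length - 1, by omega⟩) =
        (L.dropLast.map Fin.init).get ⟨N - 2, by rw [hA'len]; omega⟩ from by congr 1; exact Fin.ext this]
      rw [hA'get (N - 2) (by omega)]
    have hsplit : L.map Fin.init = L.dropLast.map Fin.init ++ [Fin.init (L.get ⟨N - 1, by omega⟩)] := by
      conv_lhs => rw [← List.dropLast_append_getLast hne]
      rw [List.map_append]
      congr 1
      rw [List.getLast_eq_getElem]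
      rfl
    have hdest : (L.map Fin.init).destutter (· ≠ ·) =
        (L.dropLast.map Fin.init).destutter (· ≠ ·) ++ [Fin.init (L.get ⟨N - 1, by omega⟩)] := by
      have h3 : (L.map Fin.init).destutter (· ≠ ·) =
          ((L.dropLast.map Fin.init) ++ [Fin.init (L.get ⟨N - 1, by omega⟩)]).destutter (· ≠ ·) :=
        congrArg (fun t : List (St n) => t.destutter (· ≠ ·)) hsplit
      rw [h3]
      apply Stmt6.destutter_append_singleton _ _ hA'ne
      intro d hd
      rw [hA'last] at hd
      rw [Option.mem_def, Option.some.injEq] at hd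
      rw [← hd]
      exact fun hc => hcb hc.symm
    have hD'ne : (L.dropLast.map Fin.init).destutter (· ≠ ·) ≠ [] := by
      intro h
      exact hA'ne ((List.destutter_eq_nil _).mp h)
    have hM0head : ((L.map Fin.init).destutter (· ≠ ·)).head? =
        some (Fin.init (L.get ⟨0, hN0⟩)) := by
      rw [Stmt6.head?_destutter, hAhead]
    have hM0last : ((L.map Fin.init).destutter (· ≠ ·)).getLast? =
        some (Fin.init (L.get ⟨N - 1, by omega⟩)) := by
      rw [Stmt6.getLast?_destutter, hAlast]
    have hcond : cycDedup (L.map Fin.init) = (L.dropLast.map Fin.init).destutter (· ≠ ·) := by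
      rw [Stmt6.cycDedup_eq]
      rw [if_pos]
      · rw [hdest, List.dropLast_concat]
      constructor
      · rw [hM0last, hM0head]
        exact congrArg some hcase
      · rw [hdest, List.length_append, List.length_singleton]
        have := List.length_pos_iff.mpr hD'ne
        omega
    rw [hcond]
    have hD'head : ((L.dropLast.map Fin.init).destutter (· ≠ ·)).head? =
        some (Fin.init (L.get ⟨0, hN0⟩)) := by
      rw [Stmt6.head?_destutter, hA'head]
    have hD'last : ((L.dropLast.map Fin.init).destutter (· ≠ ·)).getLast? =
        some (Fin.init (L.get ⟨N - 2, by omega⟩)) := by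
      rw [Stmt6.getLast?_destutter, hA'last]
    have hnd' : ((L.dropLast.map Fin.init).destutter (· ≠ ·)).Nodup := by
      apply Stmt6.nodup_of_sublist (List.destutter_sublist _ _) (List.destutter_is_chain' _ _)
      · intro p q hp hq hpq heq
        rw [hA'get p (by rw [hA'len] at hp; omega), hA'get q (by rw [hA'len] at hq; omega)] at heq
        rcases hdupL p q (by rw [hA'len] at hp; omega) (by rw [hA'len] at hq; omega) hpq heq with
          ⟨h1, _⟩ | ⟨_, h1, _⟩
        · exact Or.inl h1
        · exfalso
          rw [hA'len] at hq
          omega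
      · intro h0 h1 hlen1
        rw [Stmt6.get_of_head? hD'head h0, Stmt6.get_of_getLast? hD'last h1]
        intro hc
        exact hcb (hcase ▸ hc.symm)
    have hch' : ((L.dropLast.map Fin.init).destutter (· ≠ ·)).Chain' (Stmt6.Rrel f') := by
      apply Stmt6.main_chain f f' GF (N - 1) L.dropLast (by omega)
      · intro z hz
        exact hhamL z (List.dropLast_sublist L |>.subset hz)
      · rw [List.pairwise_iff_get]
        intro i j hij hinit
        simp only [List.get_eq_getElem, List.getElem_dropLast] at hinit
        have hjlt : j.1 < N - 1 := by
          have h2 := j.2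
          omega
        have hilt : i.1 < N - 1 := by
          have h2 := i.2
          omega
        have hd := hdupL i.1 j.1 (by omega) (by omega) (by exact hij) (by exact hinit)
        rcases hd with ⟨_, h2⟩ | ⟨_, h1, _⟩
        · show f (L.dropLast.get i) = L.dropLast.get j
          simp only [List.get_eq_getElem, List.getElem_dropLast]
          exact h2
        · omega
      · rw [List.chain'_iff_get]
        intro i hilt
        rw [hL'len] at hilt
        have h1 := hPrel i (by omega)
        simp only [List.get_eq_getElem, List.getElem_dropLast]
        simp only [List.get_eq_getElem] at h1
        exact h1
    apply Stmt6.toIs f' _ hD'ne hnd' hch'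
    intro h0 h1
    rw [Stmt6.get_of_head? hD'head h0, Stmt6.get_of_getLast? hD'last h1]
    have := hRrel_of _ _ hfc (hham (N - 2) (by omega)) hcb
    rw [hcase] at this
    exact this
  · -- no flip across the wrap
    have hcond : cycDedup (L.map Fin.init) = (L.map Fin.init).destutter (· ≠ ·) := by
      rw [Stmt6.cycDedup_eq]
      rw [if_neg]
      rintro ⟨h1, _⟩
      rw [Stmt6.getLast?_destutter, Stmt6.head?_destutter, hAlast, hAhead,
        Option.some.injEq] at h1
      exact hcase h1
    rw [hcond]
    have hMhead : ((L.map Fin.init).destutter (· ≠ ·)).head? =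
        some (Fin.init (L.get ⟨0, hN0⟩)) := by
      rw [Stmt6.head?_destutter, hAhead]
    have hMlast : ((L.map Fin.init).destutter (· ≠ ·)).getLast? =
        some (Fin.init (L.get ⟨N - 1, by omega⟩)) := by
      rw [Stmt6.getLast?_destutter, hAlast]
    have hMne : (L.map Fin.init).destutter (· ≠ ·) ≠ [] := by
      intro h
      have := (List.destutter_eq_nil _).mp h
      exact hne (List.map_eq_nil_iff.mp this)
    have hnd' : ((L.map Fin.init).destutter (· ≠ ·)).Nodup := by
      apply Stmt6.nodup_of_sublist (List.destutter_sublist _ _) (List.destutter_is_chain' _ _)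
      · intro p q hp hq hpq heq
        rw [hAget p hp, hAget q hq] at heq
        rcases hdupL p q (by simpa using hp) (by simpa using hq) hpq heq with
          ⟨h1, _⟩ | ⟨h1, h2, _⟩
        · exact Or.inl h1
        · refine Or.inr ⟨h1, ?_⟩
          rw [hAlen]
          exact h2
      · intro h0 h1 hlen1
        rw [Stmt6.get_of_head? hMhead h0, Stmt6.get_of_getLast? hMlast h1]
        exact fun hc => hcase hc.symm
    have hch' : ((L.map Fin.init).destutter (· ≠ ·)).Chain' (Stmt6.Rrel f') := by
      apply Stmt6.main_chain f f' GF N L (le_refl N) hhamL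
      · rw [List.pairwise_iff_get]
        intro i j hij hinit
        rcases hdupL i.1 j.1 i.2 j.2 hij hinit with ⟨_, h2⟩ | ⟨h1, h2, _⟩
        · exact h2
        · exfalso
          apply hcase
          have e1 : L.get j = L.get ⟨N - 1, by omega⟩ := by congr 1; exact Fin.ext h2
          have e2 : L.get i = L.get ⟨0, hN0⟩ := by congr 1; exact Fin.ext h1
          rw [← e1, ← e2]
          exact hinit.symm
      · rw [List.chain'_iff_get]
        intro i hilt
        have h1 := hPrel i (by omega)
        exact h1
    apply Stmt6.toIs f' _ hMne hnd' hch'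
    intro h0 h1
    rw [Stmt6.get_of_head? hMhead h0, Stmt6.get_of_getLast? hMlast h1]
    exact hRrel_of _ _ hwrapstep (hham (N - 1) (by omega)) hcase
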